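/- For every byte string P and every token sequence T, T ∈ VCT(P) if and only if there exist a prefix Q of P and a token t ∈ V such that T = encode(Q) ⧺ [t], P is a prefix of Q ⧺ decode(t), and T is valid. Consequently, VCT(P) is a finite set of cardinality at most (|P| + 1)·|V|. -/

import Mathlib

/-!
Formalization of a BPE tokenizer with an ordered merge list.

* `σ` is the (finite) byte alphabet, `τ` is the (finite) vocabulary of tokens.
* `base` embeds each byte as a distinct base token.
* `dec` decodes a single token to a byte string; it is extended to token
  sequences by concatenation (`decodeSeq`).
* `merges` is the ordered merge list; each merge `(l, r, n)` replaces an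
  adjacent pair `(l, r)` by the single token `n`, and satisfies
  `dec n = dec l ++ dec r`.
* `encode` turns a byte string into its base tokens and then, processing the
  merges in order, repeatedly replaces the leftmost adjacent occurrence of
  `(l, r)` by `n` until no occurrence remains, before moving to the next merge.
-/

structure BPE (σ τ : Type*) where
  base : σ → τ
  dec : τ → List σ
  merges : List (τ × τ × τ)
  base_inj : Function.Injective base
  dec_base : ∀ b, dec (base b) = [b]
  dec_merge : ∀ m ∈ merges, dec m.2.2 = dec m.1 ++ dec m.2.1

namespace BPE

variable {σ τ : Type*} [DecidableEq τ]

/-- Decode a token sequence by concatenating the decodings of its tokens. -/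
def decodeSeq (B : BPE σ τ) (T : List τ) : List σ := (T.map B.dec).flatten

/-- Replace the leftmost adjacent occurrence of `(l, r)` by `n`, if any,
also returning the starting byte position of the replaced pair. -/
def replaceLeftmost (B : BPE σ τ) (l r n : τ) : List τ → Option (ℕ × List τ)
  | [] => none
  | [_] => none
  | t :: u :: rest =>
      if t = l ∧ u = r then some (0, n :: rest)
      else (B.replaceLeftmost l r n (u :: rest)).map
        (fun p => (p.1 + (B.dec t).length, t :: p.2))

/-- Repeatedly replace the leftmost adjacent occurrence of `(l, r)` by `n`
until no occurrence remains (the fuel, taken to be the length of the list,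
suffices since every replacement shortens the list).  Also returns the list
of byte positions at which replacements were performed, in order. -/
def runMerge (B : BPE σ τ) (l r n : τ) : ℕ → List τ → List τ × List ℕ
  | 0, T => (T, [])
  | fuel + 1, T =>
    match B.replaceLeftmost l r n T with
    | none => (T, [])
    | some (p, T') =>
      let q := B.runMerge l r n fuel T'
      (q.1, p :: q.2)

/-- Process an (indexed) list of merges in order, starting from token sequence
`T`; returns the final token sequence together with the ordered list of merge
applications performed, each recorded as a pair
(index of the merge in the merge list, starting byte position). -/
def encodeRunAux (B : BPE σ τ) : List (ℕ × τ × τ × τ) → List τ → List τ × List (ℕ × ℕ)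
  | [], T => (T, [])
  | (i, l, r, n) :: ms, T =>
    let q := B.runMerge l r n T.length T
    let q' := B.encodeRunAux ms q.1
    (q'.1, q.2.map (fun p => (i, p)) ++ q'.2)

/-- The full run of the BPE encoder on a byte string `S`: the final token
sequence together with the ordered list of merge applications performed. -/
def encodeRun (B : BPE σ τ) (S : List σ) : List τ × List (ℕ × ℕ) :=
  B.encodeRunAux ((List.range B.merges.length).zip B.merges) (S.map B.base)

/-- BPE encoding of a byte string. -/
def encode (B : BPE σ τ) (S : List σ) : List τ := (B.encodeRun S).1

/-- The ordered list of merge applications (merge index, starting byte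
position) performed during the run of `encode` on `S`. -/
def encodeApps (B : BPE σ τ) (S : List σ) : List (ℕ × ℕ) := (B.encodeRun S).2

/-- A token sequence is *valid* if it is the canonical encoding of the byte
string it decodes to. -/
def Valid (B : BPE σ τ) (T : List τ) : Prop := B.encode (B.decodeSeq T) = T

/-- The merge list is in *normal form*:
(i) each token is produced by at most one merge;
(ii) every token `t` satisfies `encode (dec t) = [t]`;
(iii) every merge occurs later in the merge list than the merges producing
each of its two input tokens. -/
def NormalForm (B : BPE σ τ) : Prop :=
  (∀ i j (hi : i < B.merges.length) (hj : j < B.merges.length),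
      (B.merges[i]'hi).2.2 = (B.merges[j]'hj).2.2 → i = j) ∧
  (∀ t : τ, B.encode (B.dec t) = [t]) ∧
  (∀ i j (hi : i < B.merges.length) (hj : j < B.merges.length),
      (B.merges[i]'hi).2.2 = (B.merges[j]'hj).1 ∨
        (B.merges[i]'hi).2.2 = (B.merges[j]'hj).2.1 → i < j)

/-- The merge application `app = (t, p)` *crosses* byte position `c` if the
token it creates (the output of merge `t`, starting at byte position `p`)
has a byte span properly containing `c`. -/
def AppCrosses (B : BPE σ τ) (app : ℕ × ℕ) (c : ℕ) : Prop :=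
  ∃ h : app.1 < B.merges.length,
    app.2 < c ∧ c < app.2 + (B.dec (B.merges[app.1]'h).2.2).length

/-- Some merge applied during the run of `encode` on `S` crosses position `c`. -/
def MergeCrossesInRun (B : BPE σ τ) (S : List σ) (c : ℕ) : Prop :=
  ∃ app ∈ B.encodeApps S, B.AppCrosses app c

/-- The token sequence `U` contains a token whose byte span properly
contains position `c`. -/
def TokenCrosses (B : BPE σ τ) (U : List τ) (c : ℕ) : Prop :=
  ∃ k, k < U.length ∧
    (B.decodeSeq (U.take k)).length < c ∧ c < (B.decodeSeq (U.take (k + 1))).length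

end BPE
namespace BPE

variable {σ τ : Type*} [DecidableEq τ]

/-- The *Valid Covering Tree* of a byte string `P`: the set of all nonempty
token sequences `T = [t₁, …, tₙ]` such that (1) `P` is a prefix of
`decode T`, (2) `decode [t₁, …, t_{n-1}]` is a prefix of `P`, and
(3) `T` is valid. -/
def VCT (B : BPE σ τ) (P : List σ) : Set (List τ) :=
  {T | T ≠ [] ∧ P <+: B.decodeSeq T ∧ B.decodeSeq T.dropLast <+: P ∧ B.Valid T}

/-- The maximal prefix of a token sequence whose total decoded length is at
most `k`, i.e. the tokens whose byte spans end at or before position `k`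
(together with their spans, which are determined by the preceding tokens). -/
def spanPrefix (B : BPE σ τ) (k : ℕ) : List τ → List τ
  | [] => []
  | t :: T =>
      if (B.dec t).length ≤ k then t :: B.spanPrefix (k - (B.dec t).length) T
      else []

/-- `L₀` is a *lookahead bound* for the tokenizer if whenever two byte strings
agree on their first `k + L₀` bytes, the tokens of their encodings whose byte
spans end at or before position `k` coincide (with identical spans). -/
def LookaheadBound (B : BPE σ τ) (L₀ : ℕ) : Prop :=
  ∀ (x x' : List σ) (k : ℕ), x.take (k + L₀) = x'.take (k + L₀) →
    B.spanPrefix k (B.encode x) = B.spanPrefix k (B.encode x')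

/-- `U'` is the minimal covering prefix of `U` with respect to `P`: the
shortest prefix of `U` whose decoding has `P` as a prefix. -/
def IsMinCover (B : BPE σ τ) (P : List σ) (U U' : List τ) : Prop :=
  U' <+: U ∧ P <+: B.decodeSeq U' ∧
    ∀ U'' : List τ, U'' <+: U → P <+: B.decodeSeq U'' → U'.length ≤ U''.length

/-- The pair `(l, r)` occurs adjacently in `T`. -/
def PairAdj (l r : τ) (T : List τ) : Prop := ∃ A C, T = A ++ l :: r :: C

/-- The merge application `a = (t, i)` (merge index `t`, starting byte
position `i` of the left token) is applicable to the token sequence `T`. -/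
def Applicable (B : BPE σ τ) (a : ℕ × ℕ) (T : List τ) : Prop :=
  ∃ h : a.1 < B.merges.length, ∃ A C : List τ,
    T = A ++ (B.merges[a.1]'h).1 :: (B.merges[a.1]'h).2.1 :: C ∧
      (B.decodeSeq A).length = a.2

/-- `T'` is obtained from `T` by performing the merge application `a = (t, i)`:
the input pair of merge `t`, occurring adjacently in `T` with the left token
starting at byte position `i`, is replaced by the output token of merge `t`. -/
def ApplyApp (B : BPE σ τ) (a : ℕ × ℕ) (T T' : List τ) : Prop :=
  ∃ h : a.1 < B.merges.length, ∃ A C : List τ,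
    T = A ++ (B.merges[a.1]'h).1 :: (B.merges[a.1]'h).2.1 :: C ∧
      (B.decodeSeq A).length = a.2 ∧
      T' = A ++ (B.merges[a.1]'h).2.2 :: C

/-- Lexicographic order on merge applications `(t, i)`. -/
def appLE (a a' : ℕ × ℕ) : Prop :=
  a.1 < a'.1 ∨ (a.1 = a'.1 ∧ a.2 ≤ a'.2)

/-- `GreedyChain B T₀ apps T` holds when the sequence of merge applications
`apps` leads from token sequence `T₀` to token sequence `T`, and each applied
application is lexicographically least among those applicable to the current
token sequence. -/
inductive GreedyChain (B : BPE σ τ) : List τ → List (ℕ × ℕ) → List τ → Prop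
  | nil (T : List τ) : GreedyChain B T [] T
  | cons {T T' Tf : List τ} {a : ℕ × ℕ} {apps : List (ℕ × ℕ)} :
      B.ApplyApp a T T' →
      (∀ a', B.Applicable a' T → appLE a a') →
      GreedyChain B T' apps Tf →
      GreedyChain B T (a :: apps) Tf

end BPE

namespace BPE

variable {σ τ : Type*} [DecidableEq τ] {B : BPE σ τ}

lemma decodeSeq_nil' : B.decodeSeq ([] : List τ) = [] := rfl

lemma decodeSeq_cons' (t : τ) (T : List τ) :
    B.decodeSeq (t :: T) = B.dec t ++ B.decodeSeq T := rfl

lemma decodeSeq_append' (T U : List τ) :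
    B.decodeSeq (T ++ U) = B.decodeSeq T ++ B.decodeSeq U := by
  simp [decodeSeq]

/-- Structure of a successful leftmost replacement. -/
lemma replaceLeftmost_eq_some {l r n : τ} :
    ∀ (T : List τ) (p : ℕ) (T' : List τ), B.replaceLeftmost l r n T = some (p, T') →
      ∃ A C : List τ, T = A ++ l :: r :: C ∧ T' = A ++ n :: C ∧
        p = (B.decodeSeq A).length := by
  intro T
  induction T with
  | nil => intro p T' h; simp [replaceLeftmost] at h
  | cons t rest ih =>
    intro p T' h
    match rest, ih, h with
    | [], _, h => simp [replaceLeftmost] at h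
    | u :: rest', ih, h =>
      rw [replaceLeftmost] at h
      split at h
      · rename_i hc
        injection h with h'
        injection h' with h1 h2
        exact ⟨[], rest', by simp [hc.1, hc.2], h2.symm, h1.symm⟩
      · obtain ⟨⟨q, W⟩, hq, hmap⟩ := Option.map_eq_some_iff.mp h
        obtain ⟨A', C', hT, hW, hp⟩ := ih _ _ hq
        injection hmap with h1 h2
        dsimp only at h1 h2
        refine ⟨t :: A', C', by rw [hT]; rfl, ?_, ?_⟩
        · rw [← h2, hW]; rfl
        · rw [decodeSeq_cons', List.length_append]
          omega

section Merge

variable {l r n : τ}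

lemma length_replaceLeftmost {T : List τ} {p : ℕ} {T' : List τ}
    (h : B.replaceLeftmost l r n T = some (p, T')) : T'.length + 1 = T.length := by
  obtain ⟨A, C, rfl, rfl, -⟩ := replaceLeftmost_eq_some _ _ _ h
  simp; omega

lemma decodeSeq_replaceLeftmost (hdec : B.dec n = B.dec l ++ B.dec r)
    {T : List τ} {p : ℕ} {T' : List τ}
    (h : B.replaceLeftmost l r n T = some (p, T')) :
    B.decodeSeq T' = B.decodeSeq T := by
  obtain ⟨A, C, rfl, rfl, -⟩ := replaceLeftmost_eq_some _ _ _ h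
  simp [decodeSeq_append', decodeSeq_cons', hdec]

/-- `T` splits at byte position `c`. -/
def Bdry (B : BPE σ τ) (c : ℕ) (T : List τ) : Prop :=
  ∃ T1 T2 : List τ, T = T1 ++ T2 ∧ (B.decodeSeq T1).length = c

lemma bdry_of_replaceLeftmost (hdec : B.dec n = B.dec l ++ B.dec r)
    {T : List τ} {p : ℕ} {T' : List τ} {c : ℕ}
    (h : B.replaceLeftmost l r n T = some (p, T')) (hb : B.Bdry c T') :
    B.Bdry c T := by
  obtain ⟨A, C, rfl, rfl, -⟩ := replaceLeftmost_eq_some _ _ _ h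
  obtain ⟨V1, V2, hV, hc⟩ := hb
  rcases List.append_eq_append_iff.mp hV with ⟨a', h1, h2⟩ | ⟨c', h1, h2⟩
  · -- V1 = A ++ a', n :: C = a' ++ V2
    match a', h1, h2 with
    | [], h1, h2 =>
      refine ⟨A, l :: r :: C, rfl, ?_⟩
      rw [List.append_nil] at h1
      rw [← hc, h1]
    | x :: a'', h1, h2 =>
      obtain ⟨rfl, hC⟩ : x = n ∧ C = a'' ++ V2 := by
        injection h2 with h2a h2b; exact ⟨h2a.symm, h2b⟩
      refine ⟨A ++ l :: r :: a'', V2, by simp [hC], ?_⟩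
      rw [← hc, h1]
      simp only [decodeSeq_append', decodeSeq_cons', hdec, List.length_append]
      omega
  · -- A = V1 ++ c', V2 = c' ++ n :: C
    exact ⟨V1, c' ++ l :: r :: C, by simp [h1], hc⟩

lemma runMerge_zero' (T : List τ) : B.runMerge l r n 0 T = (T, []) := rfl

lemma runMerge_succ_some {T : List τ} {p : ℕ} {T' : List τ} {f : ℕ}
    (h : B.replaceLeftmost l r n T = some (p, T')) :
    B.runMerge l r n (f + 1) T =
      ((B.runMerge l r n f T').1, p :: (B.runMerge l r n f T').2) := by
  rw [runMerge, h]

lemma runMerge_succ_none {T : List τ} {f : ℕ}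
    (h : B.replaceLeftmost l r n T = none) :
    B.runMerge l r n (f + 1) T = (T, []) := by
  rw [runMerge, h]

lemma runMerge_of_none {T : List τ} (h : B.replaceLeftmost l r n T = none) :
    ∀ f, B.runMerge l r n f T = (T, []) := by
  intro f
  cases f with
  | zero => rfl
  | succ f => exact runMerge_succ_none h

lemma replaceLeftmost_nil : B.replaceLeftmost l r n [] = none := rfl

lemma runMerge_nil (f : ℕ) : B.runMerge l r n f [] = ([], []) :=
  runMerge_of_none replaceLeftmost_nil f

lemma decodeSeq_runMerge (hdec : B.dec n = B.dec l ++ B.dec r) :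
    ∀ (f : ℕ) (T : List τ), B.decodeSeq (B.runMerge l r n f T).1 = B.decodeSeq T := by
  intro f
  induction f with
  | zero => intro T; rfl
  | succ f ih =>
    intro T
    cases hr : B.replaceLeftmost l r n T with
    | none => rw [runMerge_succ_none hr]
    | some q =>
      obtain ⟨p, T'⟩ := q
      rw [runMerge_succ_some hr]
      exact (ih T').trans (decodeSeq_replaceLeftmost hdec hr)

lemma bdry_of_runMerge (hdec : B.dec n = B.dec l ++ B.dec r) {c : ℕ} :
    ∀ (f : ℕ) (T : List τ), B.Bdry c (B.runMerge l r n f T).1 → B.Bdry c T := by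
  intro f
  induction f with
  | zero => intro T h; exact h
  | succ f ih =>
    intro T h
    cases hr : B.replaceLeftmost l r n T with
    | none => rw [runMerge_succ_none hr] at h; exact h
    | some q =>
      obtain ⟨p, T'⟩ := q
      rw [runMerge_succ_some hr] at h
      exact bdry_of_replaceLeftmost hdec hr (ih T' h)

lemma replaceLeftmost_append_some {T2 : List τ} :
    ∀ (T1 : List τ) (p : ℕ) (T1' : List τ),
      B.replaceLeftmost l r n T1 = some (p, T1') →
      B.replaceLeftmost l r n (T1 ++ T2) = some (p, T1' ++ T2) := by
  intro T1
  induction T1 with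
  | nil => intro p T1' h; simp [replaceLeftmost] at h
  | cons t rest ih =>
    intro p T1' h
    match rest, ih, h with
    | [], _, h => simp [replaceLeftmost] at h
    | u :: rest', ih, h =>
      rw [replaceLeftmost] at h
      show B.replaceLeftmost l r n (t :: u :: (rest' ++ T2)) = _
      rw [replaceLeftmost]
      split at h
      · rename_i hc
        rw [if_pos hc]
        injection h with h'
        injection h' with h1 h2
        rw [← h1, ← h2]
        rfl
      · rename_i hc
        rw [if_neg hc]
        obtain ⟨⟨q, W⟩, hq, hmap⟩ := Option.map_eq_some_iff.mp h
        injection hmap with h1 h2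
        dsimp only at h1 h2
        have hq'' : B.replaceLeftmost l r n (u :: (rest' ++ T2)) = some (q, W ++ T2) :=
          ih _ _ hq
        rw [hq'']
        simp only [Option.map_some, Option.some_inj, Prod.mk.injEq]
        exact ⟨h1, by rw [← h2]; rfl⟩

lemma replaceLeftmost_append_none {T2 : List τ} :
    ∀ {T1 : List τ}, B.replaceLeftmost l r n T1 = none →
      (∃ A C, T1 = A ++ [l] ∧ T2 = r :: C ∧
        B.replaceLeftmost l r n (T1 ++ T2) =
          some ((B.decodeSeq A).length, A ++ n :: C)) ∨
      B.replaceLeftmost l r n (T1 ++ T2) =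
        Option.map (fun p => (p.1 + (B.decodeSeq T1).length, T1 ++ p.2))
          (B.replaceLeftmost l r n T2) := by
  intro T1
  induction T1 with
  | nil =>
    intro _
    right
    cases hr : B.replaceLeftmost l r n T2 with
    | none => simp [hr]
    | some q => simp [hr, decodeSeq_nil']
  | cons t rest ih =>
    intro hnone
    match rest, ih, hnone with
    | [], _, _ =>
      cases T2 with
      | nil =>
        right
        simp [replaceLeftmost]
      | cons u C =>
        by_cases hcon : t = l ∧ u = r
        · left
          refine ⟨[], C, by simp [hcon.1], by rw [hcon.2], ?_⟩
          show B.replaceLeftmost l r n (t :: u :: C) = _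
          rw [replaceLeftmost, if_pos hcon]
          rfl
        · right
          show B.replaceLeftmost l r n (t :: u :: C) = _
          rw [replaceLeftmost, if_neg hcon]
          cases hr : B.replaceLeftmost l r n (u :: C) with
          | none => simp [hr]
          | some q => simp [hr, decodeSeq_cons', decodeSeq_nil']
    | u :: rest', ih, hnone =>
      rw [replaceLeftmost] at hnone
      have hcon : ¬(t = l ∧ u = r) := by
        intro hcc; rw [if_pos hcc] at hnone; exact nomatch hnone
      rw [if_neg hcon] at hnone
      have hinner : B.replaceLeftmost l r n (u :: rest') = none :=
        Option.map_eq_none_iff.mp hnone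
      have hstep : B.replaceLeftmost l r n ((t :: u :: rest') ++ T2) =
          Option.map (fun p => (p.1 + (B.dec t).length, t :: p.2))
            (B.replaceLeftmost l r n ((u :: rest') ++ T2)) := by
        show B.replaceLeftmost l r n (t :: u :: (rest' ++ T2)) =
          Option.map (fun p => (p.1 + (B.dec t).length, t :: p.2))
            (B.replaceLeftmost l r n (u :: (rest' ++ T2)))
        rw [replaceLeftmost, if_neg hcon]
      rcases ih hinner with ⟨A', C, hA, hT2, hres⟩ | hres
      · left
        refine ⟨t :: A', C, by rw [hA]; rfl, hT2, ?_⟩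
        rw [hstep, hres]
        simp only [Option.map_some, Option.some_inj, Prod.mk.injEq, decodeSeq_cons',
          List.length_append, List.cons_append, true_and, and_true]
        omega
      · right
        rw [hstep, hres]
        cases hr : B.replaceLeftmost l r n T2 with
        | none => simp [hr]
        | some q =>
          simp only [hr, Option.map_some, Option.some_inj, Prod.mk.injEq,
            decodeSeq_cons', List.length_append, List.cons_append, true_and, and_true]
          omega

lemma not_bdry_junction (hdec : B.dec n = B.dec l ++ B.dec r)
    (hl : B.dec l ≠ []) (hrr : B.dec r ≠ []) (A C : List τ) :
    ¬ B.Bdry ((B.decodeSeq A).length + (B.dec l).length) (A ++ n :: C) := by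
  rintro ⟨V1, V2, hV, hc⟩
  have hlpos : 0 < (B.dec l).length := List.length_pos_iff.mpr hl
  have hrpos : 0 < (B.dec r).length := List.length_pos_iff.mpr hrr
  rcases List.append_eq_append_iff.mp hV with ⟨a', h1, h2⟩ | ⟨c', h1, h2⟩
  · -- V1 = A ++ a', n :: C = a' ++ V2
    match a', h1, h2 with
    | [], h1, h2 =>
      rw [List.append_nil] at h1
      rw [h1] at hc
      omega
    | x :: a'', h1, h2 =>
      obtain rfl : x = n := by injection h2 with h2a _; exact h2a.symm
      rw [h1] at hc
      simp only [decodeSeq_append', decodeSeq_cons', hdec, List.length_append] at hc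
      omega
  · -- A = V1 ++ c', V2 = c' ++ n :: C
    have hsum : (B.decodeSeq A).length
        = (B.decodeSeq V1).length + (B.decodeSeq c').length := by
      rw [h1, decodeSeq_append', List.length_append]
    omega

lemma runMerge_append_split (hdec : B.dec n = B.dec l ++ B.dec r)
    (hl : B.dec l ≠ []) (hrr : B.dec r ≠ []) :
    ∀ (f : ℕ) (T1 T2 : List τ), T1.length + T2.length ≤ f →
      B.Bdry (B.decodeSeq T1).length (B.runMerge l r n f (T1 ++ T2)).1 →
      ∃ V2, (B.runMerge l r n f (T1 ++ T2)).1 =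
        (B.runMerge l r n T1.length T1).1 ++ V2 := by
  intro f
  induction f with
  | zero =>
    intro T1 T2 hf _
    have h1 : T1 = [] := List.length_eq_zero_iff.mp (by omega)
    have h2 : T2 = [] := List.length_eq_zero_iff.mp (by omega)
    subst h1; subst h2
    exact ⟨[], rfl⟩
  | succ f ih =>
    intro T1 T2 hf hb
    cases h1 : B.replaceLeftmost l r n T1 with
    | some q =>
      obtain ⟨p, T1'⟩ := q
      have hcomb := replaceLeftmost_append_some (T2 := T2) _ _ _ h1
      rw [runMerge_succ_some hcomb] at hb ⊢
      have hlen : T1'.length + 1 = T1.length := length_replaceLeftmost h1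
      have hD : B.decodeSeq T1' = B.decodeSeq T1 := decodeSeq_replaceLeftmost hdec h1
      obtain ⟨V2, hV⟩ := ih T1' T2 (by omega) (by rw [hD]; exact hb)
      refine ⟨V2, ?_⟩
      rw [show (B.runMerge l r n f (T1' ++ T2)).1 =
        (B.runMerge l r n T1'.length T1').1 ++ V2 from hV]
      congr 1
      rw [← hlen, runMerge_succ_some h1]
    | none =>
      rcases replaceLeftmost_append_none (T2 := T2) h1 with ⟨A, C, hA, hC, hres⟩ | hres
      · exfalso
        rw [runMerge_succ_some hres] at hb
        have hb' := bdry_of_runMerge hdec f _ hb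
        refine not_bdry_junction hdec hl hrr A C ?_
        have : (B.decodeSeq T1).length =
            (B.decodeSeq A).length + (B.dec l).length := by
          rw [hA, decodeSeq_append']; simp [decodeSeq_cons', decodeSeq_nil']
        rwa [this] at hb'
      · cases h2 : B.replaceLeftmost l r n T2 with
        | none =>
          rw [h2] at hres
          simp only [Option.map_none] at hres
          rw [runMerge_succ_none hres, runMerge_of_none h1]
          exact ⟨T2, rfl⟩
        | some q =>
          obtain ⟨p2, T2'⟩ := q
          rw [h2] at hres
          simp only [Option.map_some] at hres
          rw [runMerge_succ_some hres] at hb ⊢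
          have hlen : T2'.length + 1 = T2.length := length_replaceLeftmost h2
          obtain ⟨V2, hV⟩ := ih T1 T2' (by omega) hb
          exact ⟨V2, hV⟩

end Merge

section Pipeline

variable {ms : List (ℕ × τ × τ × τ)}

def MsOk (B : BPE σ τ) (ms : List (ℕ × τ × τ × τ)) : Prop :=
  ∀ m ∈ ms, B.dec m.2.2.2 = B.dec m.2.1 ++ B.dec m.2.2.1

lemma encodeRunAux_nil (T : List τ) : B.encodeRunAux [] T = (T, []) := rfl

lemma encodeRunAux_cons_fst (i : ℕ) (l r n : τ) (ms : List (ℕ × τ × τ × τ)) (T : List τ) :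
    (B.encodeRunAux ((i, l, r, n) :: ms) T).1 =
      (B.encodeRunAux ms (B.runMerge l r n T.length T).1).1 := rfl

lemma decodeSeq_encodeRunAux :
    ∀ (ms : List (ℕ × τ × τ × τ)), B.MsOk ms → ∀ T : List τ,
      B.decodeSeq (B.encodeRunAux ms T).1 = B.decodeSeq T := by
  intro ms
  induction ms with
  | nil => intro _ T; rfl
  | cons m ms ih =>
    intro hok T
    obtain ⟨i, l, r, n⟩ := m
    have hdec : B.dec n = B.dec l ++ B.dec r := hok _ List.mem_cons_self
    rw [encodeRunAux_cons_fst, ih (fun m hm => hok m (List.mem_cons_of_mem _ hm)),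
      decodeSeq_runMerge hdec]

lemma bdry_of_encodeRunAux {c : ℕ} :
    ∀ (ms : List (ℕ × τ × τ × τ)), B.MsOk ms → ∀ T : List τ,
      B.Bdry c (B.encodeRunAux ms T).1 → B.Bdry c T := by
  intro ms
  induction ms with
  | nil => intro _ T h; exact h
  | cons m ms ih =>
    intro hok T h
    obtain ⟨i, l, r, n⟩ := m
    have hdec : B.dec n = B.dec l ++ B.dec r := hok _ List.mem_cons_self
    rw [encodeRunAux_cons_fst] at h
    exact bdry_of_runMerge hdec _ _ (ih (fun m hm => hok m (List.mem_cons_of_mem _ hm)) _ h)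

lemma encodeRunAux_append_split (hne : ∀ t : τ, B.dec t ≠ []) :
    ∀ (ms : List (ℕ × τ × τ × τ)), B.MsOk ms → ∀ T1 T2 : List τ,
      B.Bdry (B.decodeSeq T1).length (B.encodeRunAux ms (T1 ++ T2)).1 →
      ∃ V2, (B.encodeRunAux ms (T1 ++ T2)).1 = (B.encodeRunAux ms T1).1 ++ V2 := by
  intro ms
  induction ms with
  | nil => intro _ T1 T2 _; exact ⟨T2, rfl⟩
  | cons m ms ih =>
    intro hok T1 T2 hb
    obtain ⟨i, l, r, n⟩ := m
    have hdec : B.dec n = B.dec l ++ B.dec r := hok _ List.mem_cons_self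
    have hok' : B.MsOk ms := fun m hm => hok m (List.mem_cons_of_mem _ hm)
    rw [encodeRunAux_cons_fst] at hb ⊢
    have hbL : B.Bdry (B.decodeSeq T1).length
        (B.runMerge l r n (T1 ++ T2).length (T1 ++ T2)).1 :=
      bdry_of_encodeRunAux ms hok' _ hb
    obtain ⟨W2, hW⟩ := runMerge_append_split hdec (hne l) (hne r)
      (T1 ++ T2).length T1 T2 (by simp) hbL
    set L1 := (B.runMerge l r n T1.length T1).1 with hL1
    have hDL1 : B.decodeSeq L1 = B.decodeSeq T1 := decodeSeq_runMerge hdec _ _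
    rw [hW] at hb ⊢
    obtain ⟨V2, hV⟩ := ih hok' L1 W2 (by rw [hDL1]; exact hb)
    exact ⟨V2, hV⟩

end Pipeline

end BPE

namespace BPE

variable {σ τ : Type*} [DecidableEq τ] {B : BPE σ τ}

lemma encode_def (x : List σ) :
    B.encode x = (B.encodeRunAux ((List.range B.merges.length).zip B.merges) (x.map B.base)).1 := rfl

lemma msOk_enum : B.MsOk ((List.range B.merges.length).zip B.merges) := by
  intro m hm
  have h2 : m.2 ∈ B.merges := by
    exact (List.of_mem_zip hm).2
  exact B.dec_merge m.2 h2

lemma decodeSeq_map_base (x : List σ) : B.decodeSeq (x.map B.base) = x := by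
  induction x with
  | nil => rfl
  | cons a x ih => rw [List.map_cons, decodeSeq_cons', B.dec_base, ih]; rfl

lemma decodeSeq_encode (x : List σ) : B.decodeSeq (B.encode x) = x := by
  rw [encode_def, decodeSeq_encodeRunAux ((List.range B.merges.length).zip B.merges) msOk_enum, decodeSeq_map_base]

lemma encodeRunAux_nil_input :
    ∀ ms : List (ℕ × τ × τ × τ), B.encodeRunAux ms ([] : List τ) = ([], []) := by
  intro ms
  induction ms with
  | nil => rfl
  | cons m ms ih =>
    obtain ⟨i, l, r, n⟩ := m
    rw [encodeRunAux]
    simp only [List.length_nil, runMerge_zero', ih]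
    rfl

lemma encode_nil : B.encode ([] : List σ) = [] := by
  rw [encode_def, List.map_nil, encodeRunAux_nil_input]

lemma dec_ne_nil (hNF : B.NormalForm) (t : τ) : B.dec t ≠ [] := by
  intro h
  have h2 := hNF.2.1 t
  rw [h, encode_nil] at h2
  exact nomatch h2

lemma decodeSeq_len_zero (hne : ∀ t : τ, B.dec t ≠ []) {E : List τ}
    (h : (B.decodeSeq E).length = 0) : E = [] := by
  cases E with
  | nil => rfl
  | cons e E' =>
    rw [decodeSeq_cons', List.length_append] at h
    have := List.length_pos_iff.mpr (hne e)
    omega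

lemma eq_of_append_decLen (hne : ∀ t : τ, B.dec t ≠ []) {U1 U2 W1 W2 : List τ}
    (h : U1 ++ U2 = W1 ++ W2)
    (hlen : (B.decodeSeq U1).length = (B.decodeSeq W1).length) : U1 = W1 := by
  rcases List.append_eq_append_iff.mp h with ⟨a', h1, h2⟩ | ⟨c', h1, h2⟩
  · -- W1 = U1 ++ a'
    have hz : (B.decodeSeq a').length = 0 := by
      rw [h1, decodeSeq_append', List.length_append] at hlen; omega
    rw [h1, decodeSeq_len_zero hne hz, List.append_nil]
  · -- U1 = W1 ++ c'
    have hz : (B.decodeSeq c').length = 0 := by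
      rw [h1, decodeSeq_append', List.length_append] at hlen; omega
    rw [h1, decodeSeq_len_zero hne hz, List.append_nil]

lemma valid_dropLast (hNF : B.NormalForm) {T' : List τ} {t : τ}
    (h : B.Valid (T' ++ [t])) : B.Valid T' := by
  have hne : ∀ t : τ, B.dec t ≠ [] := dec_ne_nil hNF
  have hx : B.decodeSeq (T' ++ [t]) = B.decodeSeq T' ++ B.dec t := by
    rw [decodeSeq_append', decodeSeq_cons', decodeSeq_nil', List.append_nil]
  have h' : B.encode (B.decodeSeq T' ++ B.dec t) = T' ++ [t] := by
    rw [← hx]; exact h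
  have hEnc : B.encode (B.decodeSeq T' ++ B.dec t) =
      (B.encodeRunAux ((List.range B.merges.length).zip B.merges)
        ((B.decodeSeq T').map B.base ++ (B.dec t).map B.base)).1 := by
    rw [encode_def, List.map_append]
  have hb : B.Bdry (B.decodeSeq ((B.decodeSeq T').map B.base)).length
      (B.encodeRunAux ((List.range B.merges.length).zip B.merges)
        ((B.decodeSeq T').map B.base ++ (B.dec t).map B.base)).1 := by
    rw [← hEnc, h', decodeSeq_map_base]
    exact ⟨T', [t], rfl, rfl⟩
  obtain ⟨V2, hV⟩ := encodeRunAux_append_split hne ((List.range B.merges.length).zip B.merges) msOk_enum _ _ hb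
  rw [← hEnc, h'] at hV
  -- hV : T' ++ [t] = (aux enum (map base (D T'))).1 ++ V2
  rw [← encode_def] at hV
  have hlen : (B.decodeSeq T').length = (B.decodeSeq (B.encode (B.decodeSeq T'))).length := by
    rw [decodeSeq_encode]
  have := eq_of_append_decLen hne hV hlen
  show B.encode (B.decodeSeq T') = T'
  exact this.symm

theorem vct_char_main {σ τ : Type*} [DecidableEq τ] [Fintype τ]
    (B : BPE σ τ) (hNF : B.NormalForm) (P : List σ) :
    (∀ T : List τ,
      T ∈ B.VCT P ↔
        ∃ (Q : List σ) (t : τ), Q <+: P ∧ T = B.encode Q ++ [t] ∧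
          P <+: Q ++ B.dec t ∧ B.Valid T) ∧
      (B.VCT P).Finite ∧
      (B.VCT P).ncard ≤ (P.length + 1) * Fintype.card τ := by
  classical
  have hiff : ∀ T : List τ,
      T ∈ B.VCT P ↔
        ∃ (Q : List σ) (t : τ), Q <+: P ∧ T = B.encode Q ++ [t] ∧
          P <+: Q ++ B.dec t ∧ B.Valid T := by
    intro T
    constructor
    · rintro ⟨hT0, hP1, hP2, hval⟩
      obtain ⟨T', t, rfl⟩ : ∃ T' t, T = T' ++ [t] :=
        ⟨T.dropLast, T.getLast hT0, (List.dropLast_append_getLast hT0).symm⟩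
      have hP2' : B.decodeSeq T' <+: P := by
        rwa [List.dropLast_concat] at hP2
      have hval' : B.Valid T' := valid_dropLast hNF hval
      refine ⟨B.decodeSeq T', t, hP2', ?_, ?_, hval⟩
      · have : B.encode (B.decodeSeq T') = T' := hval'
        rw [this]
      · have hQ : B.decodeSeq T' ++ B.dec t = B.decodeSeq (T' ++ [t]) := by
          rw [decodeSeq_append', decodeSeq_cons', decodeSeq_nil', List.append_nil]
        rw [hQ]; exact hP1
    · rintro ⟨Q, t, hQP, rfl, hPQ, hval⟩
      have hDQ : B.decodeSeq (B.encode Q) = Q := decodeSeq_encode Q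
      refine ⟨by simp, ?_, ?_, hval⟩
      · rw [decodeSeq_append', decodeSeq_cons', decodeSeq_nil', List.append_nil, hDQ]
        exact hPQ
      · rw [List.dropLast_concat, hDQ]
        exact hQP
  set F : Finset (List τ) :=
    (Finset.range (P.length + 1) ×ˢ (Finset.univ : Finset τ)).image
      (fun p => B.encode (P.take p.1) ++ [p.2]) with hF
  have hsub : B.VCT P ⊆ ↑F := by
    intro T hT
    obtain ⟨Q, t, hQP, hTe, -, -⟩ := (hiff T).mp hT
    have hQ : Q = P.take Q.length := List.prefix_iff_eq_take.mp hQP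
    have hmem : (Q.length, t) ∈ Finset.range (P.length + 1) ×ˢ (Finset.univ : Finset τ) := by
      simp [Finset.mem_product, Nat.lt_succ_iff, hQP.length_le]
    refine Finset.mem_coe.mpr (Finset.mem_image.mpr ⟨(Q.length, t), hmem, ?_⟩)
    dsimp only
    rw [← hQ]
    exact hTe.symm
  have hfin : (B.VCT P).Finite := Set.Finite.subset F.finite_toSet hsub
  refine ⟨hiff, hfin, ?_⟩
  calc (B.VCT P).ncard ≤ F.card := by
        rw [← Set.ncard_coe_finset]; exact Set.ncard_le_ncard hsub F.finite_toSet
    _ ≤ ((Finset.range (P.length + 1)) ×ˢ (Finset.univ : Finset τ)).card :=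
        Finset.card_image_le
    _ = (P.length + 1) * Fintype.card τ := by
        rw [Finset.card_product, Finset.card_range, Finset.card_univ]

end BPE

/-- For every byte string `P` and token sequence `T`, `T ∈ VCT(P)` if and only
if there exist a prefix `Q` of `P` and a token `t ∈ V` such that
`T = encode Q ++ [t]`, `P` is a prefix of `Q ++ decode t`, and `T` is valid.
Consequently, `VCT(P)` is a finite set of cardinality at most
`(|P| + 1)·|V|`. -/
theorem BPE.vct_characterization {σ τ : Type*} [DecidableEq τ] [Fintype τ]
    (B : BPE σ τ) (hNF : B.NormalForm) (P : List σ) :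
    (∀ T : List τ,
      T ∈ B.VCT P ↔
        ∃ (Q : List σ) (t : τ), Q <+: P ∧ T = B.encode Q ++ [t] ∧
          P <+: Q ++ B.dec t ∧ B.Valid T) ∧
      (B.VCT P).Finite ∧
      (B.VCT P).ncard ≤ (P.length + 1) * Fintype.card τ := by
  exact BPE.vct_char_main B hNF P
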